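/- Let Ā ≥ 0 and Ē ≥ 0 be such that ‖A(t)‖, ‖A'(t)‖ ≤ Ā and ‖E(t)‖, ‖E'(t)‖ ≤ Ē for all t ∈ [0,T]. Then for every t ∈ [0,T]: ‖E(t) − E'(t)‖ ≤ 2√(dT) · Ē · (∫₀ᵀ ‖A(s) − A'(s)‖² ds)^{1/2} · e^{2√d (Ē/λ + Ā) T}. -/

import Mathlib

open Matrix Set intervalIntegral
open scoped Matrix

noncomputable section

/-- Frobenius norm of a real matrix. -/
def frob {m n : Type*} [Fintype m] [Fintype n] (M : Matrix m n ℝ) : ℝ :=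
  Real.sqrt (∑ i, ∑ j, (M i j) ^ 2)

section FrobLemmas

attribute [local instance] Matrix.frobeniusSeminormedAddCommGroup Matrix.frobeniusNormedSpace

variable {l m n : Type*} [Fintype l] [Fintype m] [Fintype n]

lemma frob_eq_norm (M : Matrix m n ℝ) : frob M = ‖M‖ := by
  rw [Matrix.frobenius_norm_def, frob, Real.sqrt_eq_rpow]
  simp [Real.norm_eq_abs, sq_abs, one_div]

lemma frob_nonneg (M : Matrix m n ℝ) : 0 ≤ frob M := Real.sqrt_nonneg _

lemma frob_continuous : Continuous (frob : Matrix m n ℝ → ℝ) := by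
  apply Real.continuous_sqrt.comp
  exact continuous_finset_sum _ fun i _ => continuous_finset_sum _ fun j _ =>
    (((continuous_apply j).comp (continuous_apply i))).pow 2

lemma frob_mul_le (X : Matrix l m ℝ) (Y : Matrix m n ℝ) : frob (X * Y) ≤ frob X * frob Y := by
  simp only [frob_eq_norm]; exact Matrix.frobenius_norm_mul X Y

lemma frob_transpose (M : Matrix m n ℝ) : frob Mᵀ = frob M := by
  simp only [frob_eq_norm]; exact Matrix.frobenius_norm_transpose M

lemma frob_smul (c : ℝ) (M : Matrix m n ℝ) : frob (c • M) = |c| * frob M := by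
  simp only [frob_eq_norm]
  rw [norm_smul, Real.norm_eq_abs]

lemma frob_add_le (X Y : Matrix m n ℝ) : frob (X + Y) ≤ frob X + frob Y := by
  simp only [frob_eq_norm]; exact norm_add_le X Y

lemma frob_sub_le (X Y : Matrix m n ℝ) : frob (X - Y) ≤ frob X + frob Y := by
  simp only [frob_eq_norm]; exact norm_sub_le X Y

lemma frob_neg (M : Matrix m n ℝ) : frob (-M) = frob M := by
  simp only [frob_eq_norm]; exact norm_neg M

lemma frob_zero : frob (0 : Matrix m n ℝ) = 0 := by
  simp only [frob_eq_norm]; exact norm_zero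

lemma frob_sub_frob_le (X Y : Matrix m n ℝ) : frob X - frob Y ≤ frob (X - Y) := by
  simp only [frob_eq_norm]; exact norm_sub_norm_le X Y

end FrobLemmas

/-- Lipschitz-type bound on the Riccati solution with respect to the
coefficient `A`:
`‖E(t) − E'(t)‖ ≤ 2√(dT) Ē (∫₀ᵀ ‖A−A'‖²)^{1/2} e^{2√d (Ē/λ + Ā) T}`. -/
theorem statement7
    (d d' : ℕ) (hd : 1 ≤ d) (hd' : 1 ≤ d') (T : ℝ) (hT : 0 < T) (lam : ℝ) (hlam : 0 < lam)
    (C : Matrix (Fin d') (Fin d) ℝ)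
    (A A' : ℝ → Matrix (Fin d) (Fin d) ℝ)
    (hA : ∀ i j, ContinuousOn (fun t => A t i j) (Icc 0 T))
    (hA' : ∀ i j, ContinuousOn (fun t => A' t i j) (Icc 0 T))
    (Q : Matrix (Fin d) (Fin d) ℝ) (hQ : Q.PosSemidef)
    (E E' : ℝ → Matrix (Fin d) (Fin d) ℝ)
    (hE0 : E 0 = Q) (hE'0 : E' 0 = Q)
    (hE : ∀ t ∈ Icc (0:ℝ) T, ∀ i j,
      HasDerivAt (fun s => E s i j)
        ((Cᵀ * C - (A t)ᵀ * E t - E t * A t - (1 / lam) • (E t * E t)) i j) t)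
    (hE' : ∀ t ∈ Icc (0:ℝ) T, ∀ i j,
      HasDerivAt (fun s => E' s i j)
        ((Cᵀ * C - (A' t)ᵀ * E' t - E' t * A' t - (1 / lam) • (E' t * E' t)) i j) t)
    (Abar Ebar : ℝ) (hAbar : 0 ≤ Abar) (hEbar : 0 ≤ Ebar)
    (hAb : ∀ t ∈ Icc (0:ℝ) T, frob (A t) ≤ Abar)
    (hA'b : ∀ t ∈ Icc (0:ℝ) T, frob (A' t) ≤ Abar)
    (hEb : ∀ t ∈ Icc (0:ℝ) T, frob (E t) ≤ Ebar)
    (hE'b : ∀ t ∈ Icc (0:ℝ) T, frob (E' t) ≤ Ebar) :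
    ∀ t ∈ Icc (0:ℝ) T,
      frob (E t - E' t) ≤
        2 * Real.sqrt (d * T) * Ebar *
          Real.sqrt (∫ s in (0:ℝ)..T, frob (A s - A' s) ^ 2) *
          Real.exp (2 * Real.sqrt d * (Ebar / lam + Abar) * T) := by
  -- clamping map
  set c : ℝ → ℝ := fun s => max 0 (min s T) with hc_def
  have hc : Continuous c := continuous_const.max (continuous_id.min continuous_const)
  have hcmem : ∀ s, c s ∈ Icc (0:ℝ) T := fun s =>
    ⟨le_max_left _ _, max_le hT.le (min_le_right _ _)⟩
  have hceq : ∀ s ∈ Icc (0:ℝ) T, c s = s := fun s hs => by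
    simp [hc_def, min_eq_left hs.2, max_eq_right hs.1]
  have hAc : Continuous fun s => A (c s) := continuous_pi fun i => continuous_pi fun j =>
    (hA i j).comp_continuous hc hcmem
  have hA'c : Continuous fun s => A' (c s) := continuous_pi fun i => continuous_pi fun j =>
    (hA' i j).comp_continuous hc hcmem
  set h : ℝ → ℝ := fun s => frob (A (c s) - A' (c s)) with hh_def
  have hhcont : Continuous h := frob_continuous.comp (hAc.sub hA'c)
  have hhnn : ∀ s, 0 ≤ h s := fun s => frob_nonneg _
  set K : ℝ := 2 * (Ebar / lam + Abar) with hK_def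
  have hK : 0 ≤ K := by positivity
  set g : ℝ → ℝ := fun s => 2 * Ebar * h s with hg_def
  have hgcont : Continuous g := continuous_const.mul hhcont
  have hgnn : ∀ s, 0 ≤ g s := fun s => mul_nonneg (by positivity) (hhnn s)
  set F : ℝ → Matrix (Fin d) (Fin d) ℝ := fun s => E s - E' s with hF_def
  set φ : ℝ → ℝ := fun s => frob (F s) with hφ_def
  set W : ℝ → ℝ := fun t => ∫ s in (0:ℝ)..t, Real.exp (-(K * s)) * g s with hW_def
  have hWd : ∀ t, HasDerivAt W (Real.exp (-(K * t)) * g t) t := fun t =>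
    (((Real.continuous_exp.comp (continuous_const.mul continuous_id).neg).mul
      hgcont).integral_hasStrictDerivAt 0 t).hasDerivAt
  set ψ : ℝ → ℝ := fun t => Real.exp (K * t) * W t with hψ_def
  have hψd : ∀ t, HasDerivAt ψ (K * ψ t + g t) t := by
    intro t
    have h1 : HasDerivAt (fun u => Real.exp (K * u)) (K * Real.exp (K * t)) t := by
      have := ((hasDerivAt_id t).const_mul K).exp
      simpa [mul_comm] using this
    have h2 := h1.mul (hWd t)
    refine h2.congr_deriv ?_
    symm
    have hcancel : Real.exp (K * t) * Real.exp (-(K * t)) = 1 := by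
      rw [← Real.exp_add]; simp
    show K * (Real.exp (K * t) * W t) + g t = _
    calc K * (Real.exp (K * t) * W t) + g t
        = K * Real.exp (K * t) * W t + (Real.exp (K * t) * Real.exp (-(K * t))) * g t := by
          rw [hcancel]; ring
      _ = K * Real.exp (K * t) * W t + Real.exp (K * t) * (Real.exp (-(K * t)) * g t) := by ring
  -- the derivative of F
  set D : ℝ → Matrix (Fin d) (Fin d) ℝ := fun t =>
    (Cᵀ * C - (A t)ᵀ * E t - E t * A t - (1 / lam) • (E t * E t)) -
    (Cᵀ * C - (A' t)ᵀ * E' t - E' t * A' t - (1 / lam) • (E' t * E' t)) with hD_def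
  have hDF : ∀ t ∈ Icc (0:ℝ) T, ∀ i j, HasDerivAt (fun s => F s i j) (D t i j) t := by
    intro t ht i j
    have := (hE t ht i j).sub (hE' t ht i j)
    simp only [hF_def, hD_def, Matrix.sub_apply]
    exact this
  -- key differential inequality
  have hkey : ∀ t ∈ Icc (0:ℝ) T, frob (D t) ≤ K * φ t + g t := by
    intro t ht
    have hsplit : D t = (-((A t)ᵀ * F t) - (A t - A' t)ᵀ * E' t) +
        (-(F t * A t) - E' t * (A t - A' t)) +
        (-((1 / lam) • (E t * F t + F t * E' t))) := by
      have e1 : (A' t)ᵀ * E' t - (A t)ᵀ * E t = -((A t)ᵀ * F t) - (A t - A' t)ᵀ * E' t := by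
        simp only [hF_def, Matrix.transpose_sub]; noncomm_ring
      have e2 : E' t * A' t - E t * A t = -(F t * A t) - E' t * (A t - A' t) := by
        simp only [hF_def]; noncomm_ring
      have e3 : (1 / lam) • (E' t * E' t) - (1 / lam) • (E t * E t) =
          -((1 / lam) • (E t * F t + F t * E' t)) := by
        rw [← smul_sub, ← smul_neg]; congr 1; simp only [hF_def]; noncomm_ring
      have : D t = ((A' t)ᵀ * E' t - (A t)ᵀ * E t) + (E' t * A' t - E t * A t) +
          ((1 / lam) • (E' t * E' t) - (1 / lam) • (E t * E t)) := by
        simp only [hD_def]; abel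
      rw [this, e1, e2, e3]
    have ha0 : 0 ≤ φ t := frob_nonneg _
    have hu0 : 0 ≤ frob (A t - A' t) := frob_nonneg _
    have b1 : frob ((A t)ᵀ * F t) ≤ Abar * φ t := by
      refine (frob_mul_le _ _).trans ?_
      rw [frob_transpose]
      exact mul_le_mul_of_nonneg_right (hAb t ht) ha0
    have b2 : frob ((A t - A' t)ᵀ * E' t) ≤ frob (A t - A' t) * Ebar := by
      refine (frob_mul_le _ _).trans ?_
      rw [frob_transpose]
      exact mul_le_mul_of_nonneg_left (hE'b t ht) hu0
    have b3 : frob (F t * A t) ≤ φ t * Abar :=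
      (frob_mul_le _ _).trans (mul_le_mul_of_nonneg_left (hAb t ht) ha0)
    have b4 : frob (E' t * (A t - A' t)) ≤ Ebar * frob (A t - A' t) :=
      (frob_mul_le _ _).trans (mul_le_mul_of_nonneg_right (hE'b t ht) hu0)
    have b5 : frob (E t * F t) ≤ Ebar * φ t :=
      (frob_mul_le _ _).trans (mul_le_mul_of_nonneg_right (hEb t ht) ha0)
    have b6 : frob (F t * E' t) ≤ φ t * Ebar :=
      (frob_mul_le _ _).trans (mul_le_mul_of_nonneg_left (hE'b t ht) ha0)
    have c1 : frob (-((A t)ᵀ * F t) - (A t - A' t)ᵀ * E' t) ≤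
        Abar * φ t + frob (A t - A' t) * Ebar := by
      refine (frob_sub_le _ _).trans ?_
      rw [frob_neg]; exact add_le_add b1 b2
    have c2 : frob (-(F t * A t) - E' t * (A t - A' t)) ≤
        φ t * Abar + Ebar * frob (A t - A' t) := by
      refine (frob_sub_le _ _).trans ?_
      rw [frob_neg]; exact add_le_add b3 b4
    have c3 : frob (-((1 / lam) • (E t * F t + F t * E' t))) ≤
        (1 / lam) * (Ebar * φ t + φ t * Ebar) := by
      rw [frob_neg, frob_smul, abs_of_pos (by positivity : (0:ℝ) < 1 / lam)]
      exact mul_le_mul_of_nonneg_left ((frob_add_le _ _).trans (add_le_add b5 b6))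
        (by positivity)
    have hgt : g t = 2 * Ebar * frob (A t - A' t) := by
      simp only [hg_def, hh_def, hceq t ht]
    calc frob (D t) ≤ frob ((-((A t)ᵀ * F t) - (A t - A' t)ᵀ * E' t) +
          (-(F t * A t) - E' t * (A t - A' t))) +
          frob (-((1 / lam) • (E t * F t + F t * E' t))) := by
          rw [hsplit]; exact frob_add_le _ _
      _ ≤ (frob (-((A t)ᵀ * F t) - (A t - A' t)ᵀ * E' t) +
          frob (-(F t * A t) - E' t * (A t - A' t))) +
          frob (-((1 / lam) • (E t * F t + F t * E' t))) :=
          add_le_add (frob_add_le _ _) le_rfl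
      _ ≤ (Abar * φ t + frob (A t - A' t) * Ebar + (φ t * Abar + Ebar * frob (A t - A' t))) +
          (1 / lam) * (Ebar * φ t + φ t * Ebar) := by
          exact add_le_add (add_le_add c1 c2) c3
      _ = K * φ t + g t := by
          rw [hgt, hK_def]; field_simp; ring
  -- continuity of φ and ψ
  have hEcont : ∀ i j, ContinuousOn (fun s => E s i j) (Icc (0:ℝ) T) := fun i j t ht =>
    ((hE t ht i j).continuousAt).continuousWithinAt
  have hE'cont : ∀ i j, ContinuousOn (fun s => E' s i j) (Icc (0:ℝ) T) := fun i j t ht =>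
    ((hE' t ht i j).continuousAt).continuousWithinAt
  have hFcont : ContinuousOn F (Icc (0:ℝ) T) := by
    apply continuousOn_pi.2; intro i; apply continuousOn_pi.2; intro j
    have := (hEcont i j).sub (hE'cont i j)
    exact this
  have hφcont : ContinuousOn φ (Icc (0:ℝ) T) := frob_continuous.comp_continuousOn hFcont
  have hψcont : Continuous ψ := continuous_iff_continuousAt.2 fun t => (hψd t).continuousAt
  -- Grönwall
  have main : ∀ t ∈ Icc (0:ℝ) T, φ t - ψ t ≤ gronwallBound 0 K 0 (t - 0) := by
    apply le_gronwallBound_of_liminf_deriv_right_le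
      (f' := fun t => frob (D t) - (K * ψ t + g t))
    · exact hφcont.sub hψcont.continuousOn
    · intro t ht r hr
      have htIcc := Ico_subset_Icc_self ht
      have hS : Filter.Tendsto (fun z => (z - t)⁻¹ • (F z - F t)) (nhdsWithin t {t}ᶜ)
          (nhds (D t)) := by
        refine tendsto_pi_nhds.2 fun i => ?_
        rw [tendsto_pi_nhds]; intro j
        have hder := hasDerivAt_iff_tendsto_slope.1 (hDF t htIcc i j)
        refine hder.congr fun z => ?_
        simp [slope, Matrix.smul_apply, Matrix.sub_apply, smul_eq_mul, vsub_eq_sub]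
      have hfrobS : Filter.Tendsto (fun z => frob ((z - t)⁻¹ • (F z - F t)))
          (nhdsWithin t {t}ᶜ) (nhds (frob (D t))) := (frob_continuous.tendsto _).comp hS
      have hslopeψ : Filter.Tendsto (fun z => (z - t)⁻¹ * (ψ z - ψ t)) (nhdsWithin t {t}ᶜ)
          (nhds (K * ψ t + g t)) := by
        have hder := hasDerivAt_iff_tendsto_slope.1 (hψd t)
        refine hder.congr fun z => ?_
        simp [slope, smul_eq_mul, vsub_eq_sub]
      have hcomb : Filter.Tendsto
          (fun z => frob ((z - t)⁻¹ • (F z - F t)) - (z - t)⁻¹ * (ψ z - ψ t))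
          (nhdsWithin t {t}ᶜ) (nhds (frob (D t) - (K * ψ t + g t))) := hfrobS.sub hslopeψ
      have hmono : nhdsWithin t (Ioi t) ≤ nhdsWithin t {t}ᶜ :=
        nhdsWithin_mono t fun z hz => Set.mem_compl_singleton_iff.2 (ne_of_gt hz)
      have hev := (hcomb.mono_left hmono).eventually_lt_const hr
      apply Filter.Eventually.frequently
      filter_upwards [hev, self_mem_nhdsWithin] with z hz1 hz2
      have hzt : 0 < z - t := sub_pos.2 hz2
      have step1 : φ z - φ t ≤ frob (F z - F t) := frob_sub_frob_le (F z) (F t)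
      have step3 : (z - t)⁻¹ * (φ z - φ t) ≤ frob ((z - t)⁻¹ • (F z - F t)) := by
        rw [frob_smul, abs_of_pos (inv_pos.2 hzt)]
        exact mul_le_mul_of_nonneg_left step1 (inv_pos.2 hzt).le
      have : (z - t)⁻¹ * ((φ z - ψ z) - (φ t - ψ t)) =
          (z - t)⁻¹ * (φ z - φ t) - (z - t)⁻¹ * (ψ z - ψ t) := by ring
      calc (z - t)⁻¹ * ((φ z - ψ z) - (φ t - ψ t))
          = (z - t)⁻¹ * (φ z - φ t) - (z - t)⁻¹ * (ψ z - ψ t) := this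
        _ ≤ frob ((z - t)⁻¹ • (F z - F t)) - (z - t)⁻¹ * (ψ z - ψ t) := by linarith
        _ < r := hz1
    · have hF0 : F 0 = 0 := by simp [hF_def, hE0, hE'0]
      have hφ0 : φ 0 = 0 := by rw [hφ_def]; simp only [hF0]; exact frob_zero
      have hψ0 : ψ 0 = 0 := by simp [hψ_def, hW_def]
      simp [hφ0, hψ0]
    · intro t ht
      have := hkey t (Ico_subset_Icc_self ht)
      have h2 : K * (φ t - ψ t) + 0 = K * φ t - K * ψ t := by ring
      linarith
  have hφψ : ∀ t ∈ Icc (0:ℝ) T, φ t ≤ ψ t := by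
    intro t ht
    have := main t ht
    rw [gronwallBound_ε0_δ0] at this
    linarith
  -- endgame
  intro t ht
  have hint_e : IntervalIntegrable (fun s => Real.exp (-(K * s)) * g s) MeasureTheory.volume 0 t :=
    ((Real.continuous_exp.comp (continuous_const.mul continuous_id).neg).mul
      hgcont).intervalIntegrable 0 t
  have hWt : W t ≤ ∫ s in (0:ℝ)..T, g s := by
    have s1 : W t ≤ ∫ s in (0:ℝ)..t, g s := by
      apply intervalIntegral.integral_mono_on ht.1 hint_e (hgcont.intervalIntegrable 0 t)
      intro s hs
      have he1 : Real.exp (-(K * s)) ≤ 1 := Real.exp_le_one_iff.2 (by nlinarith [hs.1])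
      calc Real.exp (-(K * s)) * g s ≤ 1 * g s :=
            mul_le_mul_of_nonneg_right he1 (hgnn s)
        _ = g s := one_mul _
    have s2 : (∫ s in (0:ℝ)..t, g s) ≤ ∫ s in (0:ℝ)..T, g s :=
      intervalIntegral.integral_mono_interval le_rfl ht.1 ht.2
        (Filter.Eventually.of_forall fun s => hgnn s) (hgcont.intervalIntegrable 0 T)
    linarith
  have hWT : (0:ℝ) ≤ ∫ s in (0:ℝ)..T, g s :=
    intervalIntegral.integral_nonneg hT.le fun s _ => hgnn s
  have hψt : ψ t ≤ Real.exp (K * T) * ∫ s in (0:ℝ)..T, g s := by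
    have e1 : Real.exp (K * t) ≤ Real.exp (K * T) :=
      Real.exp_le_exp.2 (by nlinarith [ht.2, ht.1])
    have hWtnn : 0 ≤ W t := intervalIntegral.integral_nonneg ht.1
      (fun s _ => mul_nonneg (Real.exp_nonneg _) (hgnn s))
    calc ψ t = Real.exp (K * t) * W t := rfl
      _ ≤ Real.exp (K * T) * W t := mul_le_mul_of_nonneg_right e1 hWtnn
      _ ≤ Real.exp (K * T) * ∫ s in (0:ℝ)..T, g s :=
          mul_le_mul_of_nonneg_left hWt (Real.exp_nonneg _)
  set I : ℝ := ∫ s in (0:ℝ)..T, h s with hI_def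
  set J : ℝ := ∫ s in (0:ℝ)..T, (h s) ^ 2 with hJ_def
  have hgint : (∫ s in (0:ℝ)..T, g s) = 2 * Ebar * I := by
    rw [hI_def, ← intervalIntegral.integral_const_mul]
  have hInn : 0 ≤ I := intervalIntegral.integral_nonneg hT.le fun s _ => hhnn s
  have hJnn : 0 ≤ J := intervalIntegral.integral_nonneg hT.le fun s _ => sq_nonneg _
  -- Cauchy–Schwarz
  have hCS : I ^ 2 ≤ T * J := by
    have hnn : 0 ≤ ∫ s in (0:ℝ)..T, (T * h s - I) ^ 2 :=
      intervalIntegral.integral_nonneg hT.le fun s _ => sq_nonneg _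
    have hexp : (∫ s in (0:ℝ)..T, (T * h s - I) ^ 2) =
        T ^ 2 * J - 2 * T * I * I + (T - 0) * I ^ 2 := by
      have heq : EqOn (fun s => (T * h s - I) ^ 2)
          (fun s => (T ^ 2 * (h s) ^ 2 - 2 * T * I * h s) + I ^ 2) (uIcc (0:ℝ) T) :=
        fun s _ => by ring
      have c1 : Continuous fun s => T ^ 2 * (h s) ^ 2 := continuous_const.mul (hhcont.pow 2)
      have c2 : Continuous fun s => 2 * T * I * h s := continuous_const.mul hhcont
      rw [intervalIntegral.integral_congr heq,
        intervalIntegral.integral_add (f := fun s => T ^ 2 * h s ^ 2 - 2 * T * I * h s) ((c1.sub c2).intervalIntegrable 0 T)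
          intervalIntegrable_const,
        intervalIntegral.integral_sub (c1.intervalIntegrable 0 T) (c2.intervalIntegrable 0 T),
        intervalIntegral.integral_const_mul, intervalIntegral.integral_const_mul,
        intervalIntegral.integral_const, smul_eq_mul]
    nlinarith [hnn, hexp, hT]
  have hIle : I ≤ Real.sqrt T * Real.sqrt J := by
    have h1 : I ≤ Real.sqrt (T * J) := by
      rw [← Real.sqrt_sq hInn]
      exact Real.sqrt_le_sqrt hCS
    rwa [Real.sqrt_mul hT.le] at h1
  have hJeq : J = ∫ s in (0:ℝ)..T, frob (A s - A' s) ^ 2 := by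
    rw [hJ_def]
    apply intervalIntegral.integral_congr
    intro s hs
    rw [uIcc_of_le hT.le] at hs
    simp [hh_def, hceq s hs]
  have hφfinal : φ t ≤ 2 * Ebar * (Real.sqrt T * Real.sqrt J) * Real.exp (K * T) := by
    have := hφψ t ht
    have h2 : Real.exp (K * T) * (2 * Ebar * I) ≤
        Real.exp (K * T) * (2 * Ebar * (Real.sqrt T * Real.sqrt J)) := by
      apply mul_le_mul_of_nonneg_left _ (Real.exp_nonneg _)
      exact mul_le_mul_of_nonneg_left hIle (by positivity)
    calc φ t ≤ ψ t := this
      _ ≤ Real.exp (K * T) * ∫ s in (0:ℝ)..T, g s := hψt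
      _ = Real.exp (K * T) * (2 * Ebar * I) := by rw [hgint]
      _ ≤ Real.exp (K * T) * (2 * Ebar * (Real.sqrt T * Real.sqrt J)) := h2
      _ = 2 * Ebar * (Real.sqrt T * Real.sqrt J) * Real.exp (K * T) := by ring
  have h1d : (1:ℝ) ≤ Real.sqrt d := by
    rw [show (1:ℝ) = Real.sqrt 1 by simp]
    exact Real.sqrt_le_sqrt (by exact_mod_cast hd)
  have hsd : 0 ≤ Real.sqrt d := Real.sqrt_nonneg _
  have hexple : Real.exp (K * T) ≤ Real.exp (2 * Real.sqrt d * (Ebar / lam + Abar) * T) := by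
    apply Real.exp_le_exp.2
    rw [hK_def]
    have hnn : 0 ≤ Ebar / lam + Abar := by positivity
    nlinarith [mul_nonneg (mul_nonneg (sub_nonneg.2 h1d) hnn) hT.le]
  have hfr : frob (E t - E' t) = φ t := by rw [hφ_def, hF_def]
  rw [hfr, ← hJeq, Real.sqrt_mul (Nat.cast_nonneg d) T]
  calc φ t ≤ 2 * Ebar * (Real.sqrt T * Real.sqrt J) * Real.exp (K * T) := hφfinal
    _ ≤ 2 * Ebar * (Real.sqrt T * Real.sqrt J) *
        Real.exp (2 * Real.sqrt d * (Ebar / lam + Abar) * T) := by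
        apply mul_le_mul_of_nonneg_left hexple (by positivity)
    _ ≤ Real.sqrt d * (2 * Ebar * (Real.sqrt T * Real.sqrt J) *
        Real.exp (2 * Real.sqrt d * (Ebar / lam + Abar) * T)) :=
        le_mul_of_one_le_left (by positivity) h1d
    _ = 2 * (Real.sqrt d * Real.sqrt T) * Ebar * Real.sqrt J *
        Real.exp (2 * Real.sqrt d * (Ebar / lam + Abar) * T) := by ring
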